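/- arXiv:1008.1081 — 4 statements merged into one kernel-verified Lean document; each statement's English description precedes it below -/
import Mathlib

section
/- (Abstract Green's formula.) For all u ∈ D(A_max) and v ∈ D(A'_max): ⟨A_max u, v⟩ − ⟨u, A'_max v⟩ = ⟨pr_{Z'}(A_max u), v_{ζ'}⟩ − ⟨u_ζ, pr_Z(A'_max v)⟩. -/
noncomputable section

open Filter Topology

namespace GrubbExt

variable {H : Type*} [NormedAddCommGroup H] [InnerProductSpace ℂ H] [CompleteSpace H]

/-- The inclusion of a closed subspace composed with the orthogonal projection onto it,
as a continuous linear map `H →L[ℂ] H`.  This is `i_K ∘ pr_K` in the notation of the paper. -/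
def projCl (K : Submodule ℂ H) (hK : IsClosed (K : Set H)) : H →L[ℂ] H :=
  haveI : CompleteSpace K := hK.completeSpace_coe
  K.subtypeL.comp (K.orthogonalProjectionOnto)

/-- `R` is the (everywhere defined, bounded) inverse of `P - lam`. -/
structure IsResolvent (P : H →ₗ.[ℂ] H) (lam : ℂ) (R : H →L[ℂ] H) : Prop where
  mem : ∀ f : H, R f ∈ P.domain
  left : ∀ u : P.domain, R (P u - lam • (u : H)) = u
  right : ∀ f : H, P ⟨R f, mem f⟩ - lam • R f = f

/-- `E^λ := I + λ(A_γ - λ)^{-1}`, given the resolvent `R = (A_γ - λ)^{-1}`. -/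
def Eop (lam : ℂ) (R : H →L[ℂ] H) : H →L[ℂ] H := ContinuousLinearMap.id ℂ H + lam • R

/-- `E'^{λ̄} := I + λ̄(A_γ^* - λ̄)^{-1}`, given the resolvent `R' = (A_γ^* - λ̄)^{-1}`. -/
def Eop' (lam : ℂ) (R' : H →L[ℂ] H) : H →L[ℂ] H :=
  ContinuousLinearMap.id ℂ H + (starRingEnd ℂ lam) • R'

/-- The resolvent set of a partially defined operator. -/
def resSet (P : H →ₗ.[ℂ] H) : Set ℂ := {lam | ∃ R : H →L[ℂ] H, IsResolvent P lam R}

/-- The set of "Rayleigh quotients" `Re⟨Pu,u⟩` over unit vectors `u` in the domain of `P`;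
the lower bound `m(P)` is the infimum of this set. -/
def raySet (P : H →ₗ.[ℂ] H) : Set ℝ :=
  {r | ∃ u : P.domain, ‖(u : H)‖ = 1 ∧ r = (inner ℂ (P u) (u : H) : ℂ).re}

/-- The abstract set-up of Grubb's extension theory: a dual pair `A_min, A'_min` of closed
densely defined operators in a Hilbert space `H`, together with a reference operator `A_γ`
lying between `A_min` and `A_max := (A'_min)*`, which is bijective with bounded inverse
(and whose adjoint is likewise bijective with bounded inverse). -/
structure Setup (H : Type*) [NormedAddCommGroup H] [InnerProductSpace ℂ H]
    [CompleteSpace H] where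
  Amin : H →ₗ.[ℂ] H
  Amin' : H →ₗ.[ℂ] H
  closed_Amin : IsClosed (Amin.graph : Set (H × H))
  closed_Amin' : IsClosed (Amin'.graph : Set (H × H))
  dense_Amin : Dense (Amin.domain : Set H)
  dense_Amin' : Dense (Amin'.domain : Set H)
  Amin_le_max : Amin ≤ Amin'.adjoint
  Amin'_le_max' : Amin' ≤ Amin.adjoint
  Agam : H →ₗ.[ℂ] H
  Amin_le_Agam : Amin ≤ Agam
  Agam_le_max : Agam ≤ Amin'.adjoint
  Agaminv : H →L[ℂ] H
  Agaminv_mem : ∀ f : H, Agaminv f ∈ Agam.domain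
  Agaminv_left : ∀ u : Agam.domain, Agaminv (Agam u) = u
  Agaminv_right : ∀ f : H, Agam ⟨Agaminv f, Agaminv_mem f⟩ = f
  Agamstarinv : H →L[ℂ] H
  Agamstarinv_mem : ∀ f : H, Agamstarinv f ∈ Agam.adjoint.domain
  Agamstarinv_left : ∀ v : Agam.adjoint.domain, Agamstarinv (Agam.adjoint v) = v
  Agamstarinv_right : ∀ f : H, Agam.adjoint ⟨Agamstarinv f, Agamstarinv_mem f⟩ = f

namespace Setup

variable (S : Setup H)

/-- `A_max := (A'_min)*`. -/
def Amax : H →ₗ.[ℂ] H := S.Amin'.adjoint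

/-- `A'_max := (A_min)*`. -/
def Amax' : H →ₗ.[ℂ] H := S.Amin.adjoint

/-- `u_ζ := u - A_γ^{-1} A_max u`, the nullspace component of `u ∈ D(A_max)`. -/
def uzeta (u : S.Amax.domain) : H := (u : H) - S.Agaminv (S.Amax u)

/-- `v_{ζ'} := v - (A_γ^*)^{-1} A'_max v`, the nullspace component of `v ∈ D(A'_max)`. -/
def vzeta (v : S.Amax'.domain) : H := (v : H) - S.Agamstarinv (S.Amax' v)

/-- `Z := ker A_max`, as a submodule of `H`. -/
def Zker : Submodule ℂ H := (LinearMap.ker S.Amax.toFun).map S.Amax.domain.subtype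

/-- `Z' := ker A'_max`, as a submodule of `H`. -/
def Zker' : Submodule ℂ H := (LinearMap.ker S.Amax'.toFun).map S.Amax'.domain.subtype

lemma coe_Zker :
    (S.Zker : Set H) = ⋂ v : S.Amin'.domain, {y : H | (inner ℂ y (S.Amin' v) : ℂ) = 0} := by
  ext y
  simp only [Set.mem_iInter, Set.mem_setOf_eq, SetLike.mem_coe, Zker, Submodule.mem_map,
    LinearMap.mem_ker]
  constructor
  · rintro ⟨u, hu, rfl⟩ v
    have h := (LinearPMap.adjoint_isFormalAdjoint S.dense_Amin') u v
    have hu' : S.Amin'.adjoint u = 0 := hu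
    rw [hu'] at h
    simpa using h.symm
  · intro h
    have hmem : y ∈ S.Amax.domain := by
      refine LinearPMap.mem_adjoint_domain_of_exists _ ⟨0, fun x => ?_⟩
      simp [h x]
    refine ⟨⟨y, hmem⟩, ?_, rfl⟩
    exact LinearPMap.adjoint_apply_eq S.dense_Amin' ⟨y, hmem⟩ fun x => by simp [h x]

lemma isClosed_Zker : IsClosed (S.Zker : Set H) := by
  rw [S.coe_Zker]
  exact isClosed_iInter fun v =>
    isClosed_eq (Continuous.inner continuous_id continuous_const) continuous_const

lemma coe_Zker' :
    (S.Zker' : Set H) = ⋂ v : S.Amin.domain, {y : H | (inner ℂ y (S.Amin v) : ℂ) = 0} := by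
  ext y
  simp only [Set.mem_iInter, Set.mem_setOf_eq, SetLike.mem_coe, Zker', Submodule.mem_map,
    LinearMap.mem_ker]
  constructor
  · rintro ⟨u, hu, rfl⟩ v
    have h := (LinearPMap.adjoint_isFormalAdjoint S.dense_Amin) u v
    have hu' : S.Amin.adjoint u = 0 := hu
    rw [hu'] at h
    simpa using h.symm
  · intro h
    have hmem : y ∈ S.Amax'.domain := by
      refine LinearPMap.mem_adjoint_domain_of_exists _ ⟨0, fun x => ?_⟩
      simp [h x]
    refine ⟨⟨y, hmem⟩, ?_, rfl⟩
    exact LinearPMap.adjoint_apply_eq S.dense_Amin ⟨y, hmem⟩ fun x => by simp [h x]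

lemma isClosed_Zker' : IsClosed (S.Zker' : Set H) := by
  rw [S.coe_Zker']
  exact isClosed_iInter fun v =>
    isClosed_eq (Continuous.inner continuous_id continuous_const) continuous_const

/-- The orthogonal projection onto `Z = ker A_max`. -/
def projZ : H →L[ℂ] H := projCl S.Zker S.isClosed_Zker

/-- The orthogonal projection onto `Z' = ker A'_max`. -/
def projZ' : H →L[ℂ] H := projCl S.Zker' S.isClosed_Zker'

variable (At : H →ₗ.[ℂ] H)

/-- `D(T) = {u_ζ : u ∈ D(Ã)}`, the set of nullspace components of elements of `D(Ã)`. -/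
def dzeta : Set H := {x | ∃ u : S.Amax.domain, (u : H) ∈ At.domain ∧ x = S.uzeta u}

/-- `{v_{ζ'} : v ∈ D(Ã*)}`. -/
def dzeta' : Set H := {x | ∃ v : S.Amax'.domain, (v : H) ∈ At.adjoint.domain ∧ x = S.vzeta v}

/-- `V := closure {u_ζ : u ∈ D(Ã)}`. -/
def Vsub : Submodule ℂ H := (Submodule.span ℂ (S.dzeta At)).topologicalClosure

/-- `W := closure {v_{ζ'} : v ∈ D(Ã*)}`. -/
def Wsub : Submodule ℂ H := (Submodule.span ℂ (S.dzeta' At)).topologicalClosure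

lemma isClosed_Vsub : IsClosed ((S.Vsub At : Set H)) :=
  Submodule.isClosed_topologicalClosure _

lemma isClosed_Wsub : IsClosed ((S.Wsub At : Set H)) :=
  Submodule.isClosed_topologicalClosure _

/-- The orthogonal projection onto `V`. -/
def projV : H →L[ℂ] H := projCl (S.Vsub At) (S.isClosed_Vsub At)

/-- The orthogonal projection onto `W`. -/
def projW : H →L[ℂ] H := projCl (S.Wsub At) (S.isClosed_Wsub At)

/-- The set `{(u_ζ, pr_W (A_max u)) : u ∈ D(Ã)}`, for a general closed subspace `W`. -/
def TgraphOn (W : Submodule ℂ H) (hW : IsClosed (W : Set H)) : Set (H × H) :=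
  {p | ∃ u : S.Amax.domain, (u : H) ∈ At.domain ∧ p.1 = S.uzeta u ∧
    p.2 = projCl W hW (S.Amax u)}

/-- The graph of the operator `T : V → W` corresponding to `Ã`. -/
def Tgraph : Set (H × H) := S.TgraphOn At (S.Wsub At) (S.isClosed_Wsub At)


/-- `F^λ := I - λ A_γ^{-1}`. -/
def Fop (lam : ℂ) : H →L[ℂ] H := ContinuousLinearMap.id ℂ H - lam • S.Agaminv

/-- `F'^{λ̄} := I - λ̄ (A_γ^*)^{-1}`. -/
def Fop' (lam : ℂ) : H →L[ℂ] H := ContinuousLinearMap.id ℂ H - (starRingEnd ℂ lam) • S.Agamstarinv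

/-- `Z_λ := ker(A_max - λ)`, as a subset of `H`. -/
def ZkerL (lam : ℂ) : Set H :=
  {x | ∃ hx : x ∈ S.Amax.domain, S.Amax ⟨x, hx⟩ = lam • x}

/-- `Z'_{λ̄} := ker(A'_max - λ̄)`, as a subset of `H`. -/
def ZkerL' (lam : ℂ) : Set H :=
  {x | ∃ hx : x ∈ S.Amax'.domain, S.Amax' ⟨x, hx⟩ = (starRingEnd ℂ lam) • x}

/-- `pr^λ_ζ u := u - (A_γ - λ)^{-1}(A_max - λ)u`, given the resolvent `R = (A_γ - λ)^{-1}`. -/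
def uzetaL (lam : ℂ) (R : H →L[ℂ] H) (u : S.Amax.domain) : H :=
  (u : H) - R (S.Amax u - lam • (u : H))

/-- `pr^{λ̄}_{ζ'} v := v - (A_γ^* - λ̄)^{-1}(A'_max - λ̄)v`,
given the resolvent `R' = (A_γ^* - λ̄)^{-1}`. -/
def vzetaL (lam : ℂ) (R' : H →L[ℂ] H) (v : S.Amax'.domain) : H :=
  (v : H) - R' (S.Amax' v - (starRingEnd ℂ lam) • (v : H))

/-- `D(T^λ) = {pr^λ_ζ u : u ∈ D(Ã)}`. -/
def dzetaL (lam : ℂ) (R : H →L[ℂ] H) : Set H :=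
  {x | ∃ u : S.Amax.domain, (u : H) ∈ At.domain ∧ x = S.uzetaL lam R u}

/-- `{pr^{λ̄}_{ζ'} v : v ∈ D(Ã*)}`. -/
def dzetaL' (lam : ℂ) (R' : H →L[ℂ] H) : Set H :=
  {x | ∃ v : S.Amax'.domain, (v : H) ∈ At.adjoint.domain ∧ x = S.vzetaL lam R' v}

/-- `V_λ := closure {pr^λ_ζ u : u ∈ D(Ã)}`. -/
def VLsub (lam : ℂ) (R : H →L[ℂ] H) : Submodule ℂ H :=
  (Submodule.span ℂ (S.dzetaL At lam R)).topologicalClosure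

/-- `W_{λ̄} := closure {pr^{λ̄}_{ζ'} v : v ∈ D(Ã*)}`. -/
def WLsub (lam : ℂ) (R' : H →L[ℂ] H) : Submodule ℂ H :=
  (Submodule.span ℂ (S.dzetaL' At lam R')).topologicalClosure

lemma isClosed_WLsub (lam : ℂ) (R' : H →L[ℂ] H) : IsClosed ((S.WLsub At lam R' : Set H)) :=
  Submodule.isClosed_topologicalClosure _

/-- The orthogonal projection onto `W_{λ̄}`. -/
def projWL (lam : ℂ) (R' : H →L[ℂ] H) : H →L[ℂ] H :=
  projCl (S.WLsub At lam R') (S.isClosed_WLsub At lam R')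

/-- The graph of the operator `T^λ : V_λ → W_{λ̄}` corresponding to `Ã - λ`:
`{(pr^λ_ζ u, pr_{W_{λ̄}}((A_max - λ)u)) : u ∈ D(Ã)}`. -/
def TgraphL (lam : ℂ) (R R' : H →L[ℂ] H) : Set (H × H) :=
  {p | ∃ u : S.Amax.domain, (u : H) ∈ At.domain ∧ p.1 = S.uzetaL lam R u ∧
    p.2 = S.projWL At lam R' (S.Amax u - lam • (u : H))}

/-- `G^λ_{V,W} x := -pr_W (λ E^λ x)`, where `W = W(Ã)`. -/
def Gval (lam : ℂ) (R : H →L[ℂ] H) (x : H) : H :=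
  -(S.projW At (lam • Eop lam R x))

/-- `G^μ_{Z,Z} z := -pr_Z (μ E^μ z)`. -/
def GZval (lam : ℂ) (R : H →L[ℂ] H) (x : H) : H :=
  -(S.projZ (lam • Eop lam R x))

lemma mem_Amax_res {lam : ℂ} {Rt : H →L[ℂ] H} (h2 : At ≤ S.Amax)
    (hRt : IsResolvent At lam Rt) (w : H) :
    S.Agaminv w - Rt (w - lam • S.Agaminv w) ∈ S.Amax.domain :=
  Submodule.sub_mem _ (S.Agam_le_max.1 (S.Agaminv_mem w)) (h2.1 (hRt.mem _))

/-- `M(λ) w := pr_ζ ((I - (Ã - λ)^{-1}(A_max - λ)) A_γ^{-1} w)`, the value of the abstract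
`M`-function on `w`. -/
def Mval {lam : ℂ} {Rt : H →L[ℂ] H} (h2 : At ≤ S.Amax) (hRt : IsResolvent At lam Rt)
    (w : H) : H :=
  S.uzeta ⟨S.Agaminv w - Rt (w - lam • S.Agaminv w), S.mem_Amax_res At h2 hRt w⟩


lemma dense_Agam : Dense (S.Agam.domain : Set H) :=
  S.dense_Amin.mono S.Amin_le_Agam.1

lemma adjoint_Agam_le : S.Agam.adjoint ≤ S.Amax' := by
  have h : S.Agam.adjoint.IsFormalAdjoint S.Amin := by
    intro x y
    have hy : (y : H) ∈ S.Agam.domain := S.Amin_le_Agam.1 y.2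
    have h1 := (LinearPMap.adjoint_isFormalAdjoint S.dense_Agam) x
      (⟨(y : H), hy⟩ : S.Agam.domain)
    have h2 : S.Amin y = S.Agam ⟨(y : H), hy⟩ := S.Amin_le_Agam.2 rfl
    rw [h2]
    exact h1
  exact h.symm.le_adjoint S.dense_Amin

end Setup

theorem statement_1 (S : Setup H) :
    ∀ (u : S.Amax.domain) (v : S.Amax'.domain),
      (inner ℂ (S.Amax u) (v : H) : ℂ) - (inner ℂ (u : H) (S.Amax' v) : ℂ) =
        (inner ℂ (S.projZ' (S.Amax u)) (S.vzeta v) : ℂ) -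
          (inner ℂ (S.uzeta u) (S.projZ (S.Amax' v)) : ℂ) := by
  intro u v
  haveI : CompleteSpace S.Zker := S.isClosed_Zker.completeSpace_coe
  haveI : CompleteSpace S.Zker' := S.isClosed_Zker'.completeSpace_coe
  set f : H := S.Amax u with hf
  set g : H := S.Amax' v with hg
  have hγmem : S.Agaminv f ∈ S.Amax.domain := S.Agam_le_max.1 (S.Agaminv_mem f)
  have hAf : S.Amax ⟨S.Agaminv f, hγmem⟩ = f := by
    have h1 : S.Agam ⟨S.Agaminv f, S.Agaminv_mem f⟩ =
        S.Amax ⟨S.Agaminv f, hγmem⟩ := S.Agam_le_max.2 rfl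
    rw [← h1]
    exact S.Agaminv_right f
  have hγ'mem : S.Agamstarinv g ∈ S.Amax'.domain := S.adjoint_Agam_le.1 (S.Agamstarinv_mem g)
  have hAg : S.Amax' ⟨S.Agamstarinv g, hγ'mem⟩ = g := by
    have h1 : S.Agam.adjoint ⟨S.Agamstarinv g, S.Agamstarinv_mem g⟩ =
        S.Amax' ⟨S.Agamstarinv g, hγ'mem⟩ := S.adjoint_Agam_le.2 rfl
    rw [← h1]
    exact S.Agamstarinv_right g
  have huζ : S.uzeta u ∈ S.Zker := by
    refine ⟨u - ⟨S.Agaminv f, hγmem⟩, ?_, ?_⟩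
    · have h0 : S.Amax (u - ⟨S.Agaminv f, hγmem⟩) = 0 := by
        rw [LinearPMap.map_sub, hAf, ← hf, sub_self]
      exact LinearMap.mem_ker.mpr h0
    · simp [Setup.uzeta, hf]
  have hvζ : S.vzeta v ∈ S.Zker' := by
    refine ⟨v - ⟨S.Agamstarinv g, hγ'mem⟩, ?_, ?_⟩
    · have h0 : S.Amax' (v - ⟨S.Agamstarinv g, hγ'mem⟩) = 0 := by
        rw [LinearPMap.map_sub, hAg, ← hg, sub_self]
      exact LinearMap.mem_ker.mpr h0
    · simp [Setup.vzeta, hg]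
  have hpair : (inner ℂ f (S.Agamstarinv g) : ℂ) = inner ℂ (S.Agaminv f) g := by
    have h1 := (LinearPMap.adjoint_isFormalAdjoint S.dense_Agam)
      (⟨S.Agamstarinv g, S.Agamstarinv_mem g⟩ : S.Agam.adjoint.domain)
      (⟨S.Agaminv f, S.Agaminv_mem f⟩ : S.Agam.domain)
    rw [S.Agamstarinv_right g, S.Agaminv_right f] at h1
    have h2 := congrArg (starRingEnd ℂ) h1
    simpa [inner_conj_symm] using h2.symm
  have hv : (v : H) = S.Agamstarinv g + S.vzeta v := by simp [Setup.vzeta, hg]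
  have hu : (u : H) = S.Agaminv f + S.uzeta u := by simp [Setup.uzeta, hf]
  have hproj1 : (inner ℂ (S.projZ' f) (S.vzeta v) : ℂ) = inner ℂ f (S.vzeta v) := by
    have h0 := S.Zker'.starProjection_inner_eq_zero f (S.vzeta v) hvζ
    have heq : S.projZ' f = ((S.Zker'.orthogonalProjectionOnto f : S.Zker') : H) := rfl
    rw [inner_sub_left, sub_eq_zero] at h0
    rw [heq]
    exact h0.symm
  have hproj2 : (inner ℂ (S.uzeta u) (S.projZ g) : ℂ) = inner ℂ (S.uzeta u) g := by
    have h0 : (inner ℂ (g - ((S.Zker.orthogonalProjectionOnto g : S.Zker) : H)) (S.uzeta u) : ℂ) = 0 :=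
      S.Zker.starProjection_inner_eq_zero g (S.uzeta u) huζ
    have h1 : (inner ℂ (S.uzeta u) (g - ((S.Zker.orthogonalProjectionOnto g : S.Zker) : H)) : ℂ) = 0 := by
      rw [← inner_conj_symm, h0, map_zero]
    have heq : S.projZ g = ((S.Zker.orthogonalProjectionOnto g : S.Zker) : H) := rfl
    rw [inner_sub_right, sub_eq_zero] at h1
    rw [heq]
    exact h1.symm
  calc (inner ℂ f (v : H) : ℂ) - inner ℂ (u : H) g
      = (inner ℂ f (S.Agamstarinv g) + inner ℂ f (S.vzeta v)) -
        (inner ℂ (S.Agaminv f) g + inner ℂ (S.uzeta u) g) := by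
        rw [hv, hu, inner_add_right, inner_add_left]
    _ = inner ℂ f (S.vzeta v) - inner ℂ (S.uzeta u) g := by rw [hpair]; ring
    _ = inner ℂ (S.projZ' f) (S.vzeta v) - inner ℂ (S.uzeta u) (S.projZ g) := by
        rw [hproj1, hproj2]

end GrubbExt
end
end

section
/- (Theorem 5.1, kernel and range.) Let Ã ∈ M be closed, corresponding to T : V → W. Then ker Ã = ker T, and ran Ã = ran T + (H ⊖ W), where H ⊖ W denotes the orthogonal complement of W in H and the sum is the set of all sums of an element of ran T and an element of H ⊖ W. -/
noncomputable section

open Filter Topology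

namespace GrubbExt

variable {H : Type*} [NormedAddCommGroup H] [InnerProductSpace ℂ H] [CompleteSpace H]

section Aux

local notation "⟪" x ", " y "⟫" => @inner ℂ _ _ x y

lemma mem_graph_of_forall_adjoint (At : H →ₗ.[ℂ] H)
    (hd : Dense (At.domain : Set H)) (hcl : IsClosed (At.graph : Set (H × H)))
    {x y : H} (hxy : ∀ v : At.adjoint.domain, ⟪x, At.adjoint v⟫ = ⟪y, (v : H)⟫) :
    ∃ hx : x ∈ At.domain, At ⟨x, hx⟩ = y := by
  set e := WithLp.prodContinuousLinearEquiv 2 ℂ H H with he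
  set G : Submodule ℂ (WithLp 2 (H × H)) :=
    At.graph.comap (e.toLinearEquiv : WithLp 2 (H × H) →ₗ[ℂ] H × H) with hG
  have hGc : IsClosed (G : Set (WithLp 2 (H × H))) := hcl.preimage e.continuous
  haveI : CompleteSpace G := hGc.completeSpace_coe
  have hmem : e.symm (x, y) ∈ G := by
    rw [← Submodule.orthogonal_orthogonal G]
    rw [Submodule.mem_orthogonal]
    intro q hq
    rw [Submodule.mem_orthogonal] at hq
    set a := (e q).1 with ha
    set b := (e q).2 with hb
    have hpair : ∀ u : At.domain, ⟪(u : H), a⟫ + ⟪At u, b⟫ = 0 := by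
      intro u
      have hm : e.symm ((u : H), At u) ∈ G := by
        simpa [hG, Submodule.mem_comap] using At.mem_graph u
      have := hq _ hm
      rw [WithLp.prod_inner_apply] at this
      convert this using 2 <;> rfl
    have hbmem : b ∈ At.adjoint.domain := by
      refine LinearPMap.mem_adjoint_domain_of_exists _ ⟨-a, fun u => ?_⟩
      have := hpair u
      have h2 := congrArg (starRingEnd ℂ) this
      simp only [map_add, inner_conj_symm, map_zero] at h2
      rw [inner_neg_left]
      linear_combination -h2
    have hadj : At.adjoint ⟨b, hbmem⟩ = -a := by
      refine LinearPMap.adjoint_apply_eq hd _ fun u => ?_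
      have := hpair u
      have h2 := congrArg (starRingEnd ℂ) this
      simp only [map_add, inner_conj_symm, map_zero] at h2
      rw [inner_neg_left]
      linear_combination -h2
    have hx := hxy ⟨b, hbmem⟩
    rw [hadj] at hx
    rw [WithLp.prod_inner_apply]
    have h1 : ⟪a, x⟫ + ⟪b, y⟫ = 0 := by
      have h2 := congrArg (starRingEnd ℂ) hx
      simp only [inner_conj_symm] at h2
      rw [inner_neg_left] at h2
      linear_combination -h2
    convert h1 using 2 <;> rfl
  rw [Submodule.mem_comap] at hmem
  have : (x, y) ∈ At.graph := by simpa using hmem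
  rw [LinearPMap.mem_graph_iff] at this
  obtain ⟨z, hz1, hz2⟩ := this
  have hz1' : (z : H) = x := hz1
  subst hz1'
  exact ⟨z.2, hz2⟩

variable (S : Setup H)

lemma agamstarinv_inner (g f : H) : ⟪S.Agamstarinv g, f⟫ = ⟪g, S.Agaminv f⟫ := by
  have hd : Dense (S.Agam.domain : Set H) :=
    S.dense_Amin.mono (fun x hx => S.Amin_le_Agam.1 hx)
  have h1 := (LinearPMap.adjoint_isFormalAdjoint hd)
    ⟨S.Agamstarinv g, S.Agamstarinv_mem g⟩ ⟨S.Agaminv f, S.Agaminv_mem f⟩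
  rw [S.Agamstarinv_right, S.Agaminv_right] at h1
  exact h1.symm

lemma agaminv_inner (f g : H) : ⟪S.Agaminv f, g⟫ = ⟪f, S.Agamstarinv g⟫ := by
  have := congrArg (starRingEnd ℂ) (agamstarinv_inner S g f)
  simpa [inner_conj_symm] using this.symm

variable (At : H →ₗ.[ℂ] H) (h1 : S.Amin ≤ At) (h2 : At ≤ S.Amax)

include h1 in
lemma dense_At_dom : Dense (At.domain : Set H) :=
  S.dense_Amin.mono (fun x hx => h1.1 hx)

include h1 in
lemma adjoint_le_Amax' : At.adjoint ≤ S.Amax' := by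
  have hdAt : Dense (At.domain : Set H) := dense_At_dom S At h1
  have hfa : S.Amin.IsFormalAdjoint At.adjoint := by
    intro u v
    have hmem : (u : H) ∈ At.domain := h1.1 u.2
    have heq : S.Amin u = At ⟨u, hmem⟩ := h1.2 rfl
    have h := (LinearPMap.adjoint_isFormalAdjoint hdAt).symm ⟨u, hmem⟩ v
    rw [heq]
    exact h
  exact hfa.le_adjoint S.dense_Amin

include h1 in
lemma vz_mem_W (v : At.adjoint.domain) :
    (v : H) - S.Agamstarinv (At.adjoint v) ∈ S.Wsub At := by
  have hAmle : At.adjoint ≤ S.Amax' := adjoint_le_Amax' S At h1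
  apply Submodule.le_topologicalClosure
  apply Submodule.subset_span
  refine ⟨⟨v, hAmle.1 v.2⟩, v.2, ?_⟩
  have h : At.adjoint v = S.Amax' ⟨v, hAmle.1 v.2⟩ := hAmle.2 rfl
  simp only [Setup.vzeta, ← h]

include h1 in
lemma key_inner (u0 : At.domain) (v : At.adjoint.domain) :
    ⟪(u0 : H) - S.Agaminv (At u0), At.adjoint v⟫
      = ⟪At u0, (v : H) - S.Agamstarinv (At.adjoint v)⟫ := by
  have hdAt : Dense (At.domain : Set H) := dense_At_dom S At h1
  have hfa := (LinearPMap.adjoint_isFormalAdjoint hdAt) v u0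
  have hc := congrArg (starRingEnd ℂ) hfa
  simp only [inner_conj_symm] at hc
  rw [inner_sub_left, inner_sub_right, hc, agaminv_inner S]

lemma projCl_eq_zero_iff (K : Submodule ℂ H) (hK : IsClosed (K : Set H)) (x : H) :
    projCl K hK x = 0 ↔ x ∈ Kᗮ := by
  haveI : CompleteSpace K := hK.completeSpace_coe
  rw [← Submodule.orthogonalProjectionOnto_eq_zero_iff (K := K)]
  simp only [projCl, ContinuousLinearMap.comp_apply, Submodule.coe_subtypeL',
    Submodule.coe_subtype, Submodule.coe_eq_zero]

lemma sub_projCl_mem (K : Submodule ℂ H) (hK : IsClosed (K : Set H)) (x : H) :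
    x - projCl K hK x ∈ Kᗮ := by
  haveI : CompleteSpace K := hK.completeSpace_coe
  exact Submodule.sub_starProjection_mem_orthogonal (K := K) x

end Aux

theorem statement_6 (S : Setup H) (At : H →ₗ.[ℂ] H)
    (h1 : S.Amin ≤ At) (h2 : At ≤ S.Amax)
    (hcl : IsClosed (At.graph : Set (H × H)))
    (T : H →ₗ.[ℂ] H) (hT : (T.graph : Set (H × H)) = S.Tgraph At) :
    {x : H | ∃ hx : x ∈ At.domain, At ⟨x, hx⟩ = 0} =
      {x : H | (x, (0 : H)) ∈ T.graph} ∧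
    {f : H | ∃ u : At.domain, At u = f} =
      {f : H | ∃ y g : H, (∃ x : H, (x, y) ∈ T.graph) ∧
        g ∈ (S.Wsub At)ᗮ ∧ f = y + g} := by
  have hdAt : Dense (At.domain : Set H) := dense_At_dom S At h1
  have hTmem : ∀ p : H × H, p ∈ T.graph ↔ p ∈ S.Tgraph At := by
    intro p
    constructor
    · intro hp; rw [← hT]; exact hp
    · intro hp
      have : p ∈ (T.graph : Set (H × H)) := by rw [hT]; exact hp
      exact this
  constructor
  · ext x
    simp only [Set.mem_setOf_eq]
    rw [hTmem]
    constructor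
    · rintro ⟨hx, hx0⟩
      refine ⟨⟨x, h2.1 hx⟩, hx, ?_, ?_⟩
      · have hA : At ⟨x, hx⟩ = S.Amax ⟨x, h2.1 hx⟩ := h2.2 rfl
        rw [hx0] at hA
        simp [Setup.uzeta, ← hA]
      · have hA : At ⟨x, hx⟩ = S.Amax ⟨x, h2.1 hx⟩ := h2.2 rfl
        rw [hx0] at hA
        simp [← hA]
    · rintro ⟨u, hu, hx1, hx2⟩
      have hAeq : At ⟨u, hu⟩ = S.Amax u := h2.2 rfl
      have hfW : At ⟨u, hu⟩ ∈ (S.Wsub At)ᗮ := by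
        rw [hAeq]
        rw [← projCl_eq_zero_iff (S.Wsub At) (S.isClosed_Wsub At)]
        exact hx2.symm
      have hres := mem_graph_of_forall_adjoint At hdAt hcl (x := x) (y := 0) ?_
      · exact hres
      intro v
      have hx1' : x = ((⟨u, hu⟩ : At.domain) : H) - S.Agaminv (At ⟨u, hu⟩) := by
        rw [hAeq]; exact hx1
      rw [hx1', key_inner S At h1]
      rw [inner_zero_left]
      exact (Submodule.mem_orthogonal' _ _).1 hfW _ (vz_mem_W S At h1 v)
  · ext f
    simp only [Set.mem_setOf_eq]
    constructor
    · rintro ⟨u0, hf⟩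
      have hAeq : At u0 = S.Amax ⟨u0, h2.1 u0.2⟩ := h2.2 rfl
      refine ⟨projCl (S.Wsub At) (S.isClosed_Wsub At) (S.Amax ⟨u0, h2.1 u0.2⟩),
        f - projCl (S.Wsub At) (S.isClosed_Wsub At) (S.Amax ⟨u0, h2.1 u0.2⟩),
        ⟨S.uzeta ⟨u0, h2.1 u0.2⟩, ?_⟩, ?_, by abel⟩
      · rw [hTmem]
        exact ⟨⟨u0, h2.1 u0.2⟩, u0.2, rfl, rfl⟩
      · rw [← hAeq, hf]
        exact sub_projCl_mem _ _ f
    · rintro ⟨y, g, ⟨x, hxy⟩, hg, hf⟩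
      rw [hTmem] at hxy
      obtain ⟨u, hu, hx1, hy2⟩ := hxy
      have hAeq : At ⟨u, hu⟩ = S.Amax u := h2.2 rfl
      set h := y + g - At ⟨u, hu⟩ with hh
      have hhW : h ∈ (S.Wsub At)ᗮ := by
        have h1' : h = g - (At ⟨u, hu⟩ - projCl (S.Wsub At) (S.isClosed_Wsub At) (At ⟨u, hu⟩)) := by
          rw [hh, hAeq, ← hy2]; abel
        rw [h1']
        exact Submodule.sub_mem _ hg (sub_projCl_mem _ _ _)
      have hres := mem_graph_of_forall_adjoint At hdAt hcl (x := S.Agaminv h) (y := h) ?_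
      · obtain ⟨hmem, heq⟩ := hres
        refine ⟨⟨u, hu⟩ + ⟨S.Agaminv h, hmem⟩, ?_⟩
        rw [At.map_add, heq, hh, hf]
        abel
      intro v
      rw [agaminv_inner S]
      have hz : (inner ℂ h ((v : H) - S.Agamstarinv (At.adjoint v)) : ℂ) = 0 :=
        (Submodule.mem_orthogonal' _ _).1 hhW _ (vz_mem_W S At h1 v)
      rw [inner_sub_right] at hz
      linear_combination -hz


end GrubbExt
end
end

section
/- For every λ ∈ ρ(A_γ): E^λ F^λ = F^λ E^λ = I on H; E^λ maps Z bijectively onto Z_λ, with the restriction of F^λ to Z_λ as inverse; and E'^{λ̄} maps Z' bijectively onto Z'_{λ̄}, with the restriction of F'^{λ̄} to Z'_{λ̄} as inverse. -/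
noncomputable section

open Filter Topology

namespace GrubbExt

variable {H : Type*} [NormedAddCommGroup H] [InnerProductSpace ℂ H] [CompleteSpace H]

section Gen
variable (P Q : H →ₗ.[ℂ] H) (μ : ℂ) (B Rr : H →L[ℂ] H)
variable (hPQ : P ≤ Q)
variable (hBmem : ∀ f : H, B f ∈ P.domain)
variable (hBl : ∀ u : P.domain, B (P u) = u)
variable (hBr : ∀ f : H, P ⟨B f, hBmem f⟩ = f)
variable (hRr : IsResolvent P μ Rr)

include hBmem hBl hBr hRr in
lemma gen_EF (x : H) :
    (ContinuousLinearMap.id ℂ H + μ • Rr) ((ContinuousLinearMap.id ℂ H - μ • B) x) = x ∧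
    (ContinuousLinearMap.id ℂ H - μ • B) ((ContinuousLinearMap.id ℂ H + μ • Rr) x) = x := by
  have h1 : Rr (x - μ • B x) = B x := by
    have := hRr.left ⟨B x, hBmem x⟩
    rwa [hBr x] at this
  have h2 : B (x + μ • Rr x) = Rr x := by
    have hr := hRr.right x
    have : P ⟨Rr x, hRr.mem x⟩ = x + μ • Rr x := sub_eq_iff_eq_add.mp hr
    have := hBl ⟨Rr x, hRr.mem x⟩
    rw [‹P ⟨Rr x, hRr.mem x⟩ = x + μ • Rr x›] at this
    exact this
  constructor
  · simp only [ContinuousLinearMap.add_apply, ContinuousLinearMap.sub_apply,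
      ContinuousLinearMap.smul_apply, ContinuousLinearMap.id_apply, h1]
    abel
  · simp only [ContinuousLinearMap.add_apply, ContinuousLinearMap.sub_apply,
      ContinuousLinearMap.smul_apply, ContinuousLinearMap.id_apply]
    rw [show x + μ • Rr x = (ContinuousLinearMap.id ℂ H + μ • Rr) x from rfl] at h2
    simp only [ContinuousLinearMap.add_apply, ContinuousLinearMap.smul_apply,
      ContinuousLinearMap.id_apply] at h2
    rw [h2]; abel

include hPQ hBmem hBl hBr hRr in
lemma gen_bij :
    Set.BijOn (ContinuousLinearMap.id ℂ H + μ • Rr)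
      {x | ∃ hx : x ∈ Q.domain, Q ⟨x, hx⟩ = 0}
      {x | ∃ hx : x ∈ Q.domain, Q ⟨x, hx⟩ = μ • x} ∧
    Set.MapsTo (ContinuousLinearMap.id ℂ H - μ • B)
      {x | ∃ hx : x ∈ Q.domain, Q ⟨x, hx⟩ = μ • x}
      {x | ∃ hx : x ∈ Q.domain, Q ⟨x, hx⟩ = 0} := by
  set E := ContinuousLinearMap.id ℂ H + μ • Rr with hE
  set F := ContinuousLinearMap.id ℂ H - μ • B with hF
  have hEF := fun x => (gen_EF P μ B Rr hBmem hBl hBr hRr x).1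
  have hFE := fun x => (gen_EF P μ B Rr hBmem hBl hBr hRr x).2
  have hQR : ∀ x : H, Q ⟨Rr x, hPQ.1 (hRr.mem x)⟩ = x + μ • Rr x := by
    intro x
    have h := hPQ.2 (x := ⟨Rr x, hRr.mem x⟩) (y := ⟨Rr x, hPQ.1 (hRr.mem x)⟩) rfl
    rw [← h]
    exact sub_eq_iff_eq_add.mp (hRr.right x)
  have hQB : ∀ x : H, Q ⟨B x, hPQ.1 (hBmem x)⟩ = x := by
    intro x
    have h := hPQ.2 (x := ⟨B x, hBmem x⟩) (y := ⟨B x, hPQ.1 (hBmem x)⟩) rfl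
    rw [← h, hBr x]
  have hmapsE : Set.MapsTo E {x | ∃ hx : x ∈ Q.domain, Q ⟨x, hx⟩ = 0}
      {x | ∃ hx : x ∈ Q.domain, Q ⟨x, hx⟩ = μ • x} := by
    rintro z ⟨hz, hz0⟩
    have hmem : E z ∈ Q.domain := by
      have : E z = z + μ • Rr z := by
        simp [hE, ContinuousLinearMap.add_apply]
      rw [this]
      exact Q.domain.add_mem hz (Q.domain.smul_mem _ (hPQ.1 (hRr.mem z)))
    refine ⟨hmem, ?_⟩
    have hsplit : (⟨E z, hmem⟩ : Q.domain) = ⟨z, hz⟩ + μ • ⟨Rr z, hPQ.1 (hRr.mem z)⟩ := by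
      apply Subtype.ext
      simp [hE, ContinuousLinearMap.add_apply]
    rw [hsplit, Q.map_add, Q.map_smul, hz0, hQR]
    have : E z = z + μ • Rr z := by simp [hE, ContinuousLinearMap.add_apply]
    rw [this]
    simp [smul_add, smul_smul]
  have hmapsF : Set.MapsTo F {x | ∃ hx : x ∈ Q.domain, Q ⟨x, hx⟩ = μ • x}
      {x | ∃ hx : x ∈ Q.domain, Q ⟨x, hx⟩ = 0} := by
    rintro z ⟨hz, hzl⟩
    have hmem : F z ∈ Q.domain := by
      have : F z = z - μ • B z := by simp [hF, ContinuousLinearMap.sub_apply]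
      rw [this]
      exact Q.domain.sub_mem hz (Q.domain.smul_mem _ (hPQ.1 (hBmem z)))
    refine ⟨hmem, ?_⟩
    have hsplit : (⟨F z, hmem⟩ : Q.domain) = ⟨z, hz⟩ - μ • ⟨B z, hPQ.1 (hBmem z)⟩ := by
      apply Subtype.ext
      simp [hF, ContinuousLinearMap.sub_apply]
    rw [hsplit, Q.map_sub, Q.map_smul, hzl, hQB]
    simp
  refine ⟨⟨hmapsE, ?_, ?_⟩, hmapsF⟩
  · intro a _ b _ hab
    have := congrArg F hab
    rwa [hFE, hFE] at this
  · rintro y hy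
    exact ⟨F y, hmapsF hy, hEF y⟩

end Gen

theorem statement_9 (S : Setup H) (lam : ℂ) (R R' : H →L[ℂ] H)
    (hR : IsResolvent S.Agam lam R)
    (hR' : IsResolvent S.Agam.adjoint (starRingEnd ℂ lam) R') :
    (∀ x : H, Eop lam R (S.Fop lam x) = x ∧ S.Fop lam (Eop lam R x) = x) ∧
    (∀ x : H, Eop' lam R' (S.Fop' lam x) = x ∧ S.Fop' lam (Eop' lam R' x) = x) ∧
    Set.BijOn (Eop lam R) (S.Zker : Set H) (S.ZkerL lam) ∧
    Set.MapsTo (S.Fop lam) (S.ZkerL lam) (S.Zker : Set H) ∧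
    Set.BijOn (Eop' lam R') (S.Zker' : Set H) (S.ZkerL' lam) ∧
    Set.MapsTo (S.Fop' lam) (S.ZkerL' lam) (S.Zker' : Set H) := by
  have hdense : Dense (S.Agam.domain : Set H) := S.dense_Amin.mono S.Amin_le_Agam.1
  have hadj : S.Agam.adjoint ≤ S.Amax' := by
    refine LinearPMap.IsFormalAdjoint.le_adjoint S.dense_Amin ?_
    intro x y
    have hsym := (LinearPMap.adjoint_isFormalAdjoint hdense).symm
      ⟨(x : H), S.Amin_le_Agam.1 x.2⟩ y
    rwa [← S.Amin_le_Agam.2 (x := x) (y := ⟨(x : H), S.Amin_le_Agam.1 x.2⟩) rfl] at hsym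
  have hZ : (S.Zker : Set H) = {x | ∃ hx : x ∈ S.Amax.domain, S.Amax ⟨x, hx⟩ = 0} := by
    ext x
    simp only [SetLike.mem_coe, Setup.Zker, Submodule.mem_map, LinearMap.mem_ker,
      Set.mem_setOf_eq]
    constructor
    · rintro ⟨⟨u, hu⟩, h0, rfl⟩
      exact ⟨hu, h0⟩
    · rintro ⟨hx, h0⟩
      exact ⟨⟨x, hx⟩, h0, rfl⟩
  have hZ' : (S.Zker' : Set H) = {x | ∃ hx : x ∈ S.Amax'.domain, S.Amax' ⟨x, hx⟩ = 0} := by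
    ext x
    simp only [SetLike.mem_coe, Setup.Zker', Submodule.mem_map, LinearMap.mem_ker,
      Set.mem_setOf_eq]
    constructor
    · rintro ⟨⟨u, hu⟩, h0, rfl⟩
      exact ⟨hu, h0⟩
    · rintro ⟨hx, h0⟩
      exact ⟨⟨x, hx⟩, h0, rfl⟩
  have hEF := gen_EF S.Agam lam S.Agaminv R S.Agaminv_mem S.Agaminv_left S.Agaminv_right hR
  have hEF' := gen_EF S.Agam.adjoint (starRingEnd ℂ lam) S.Agamstarinv R'
    S.Agamstarinv_mem S.Agamstarinv_left S.Agamstarinv_right hR'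
  have hbij := gen_bij S.Agam S.Amax lam S.Agaminv R S.Agam_le_max
    S.Agaminv_mem S.Agaminv_left S.Agaminv_right hR
  have hbij' := gen_bij S.Agam.adjoint S.Amax' (starRingEnd ℂ lam) S.Agamstarinv R' hadj
    S.Agamstarinv_mem S.Agamstarinv_left S.Agamstarinv_right hR'
  refine ⟨hEF, hEF', ?_, ?_, ?_, ?_⟩
  · rw [hZ]; exact hbij.1
  · rw [hZ]; exact hbij.2
  · rw [hZ']; exact hbij'.1
  · rw [hZ']; exact hbij'.2


end GrubbExt
end
end

section
/- (Theorem 5.3.) Let Ã ∈ M be closed, corresponding to T : V → W, and let λ ∈ ρ(A_γ). Then E^λ restricts to a bounded bijection E^λ_V : V → V_λ and E'^{λ̄} restricts to a bounded bijection E'^{λ̄}_W : W → W_{λ̄}; moreover D(T^λ) = E^λ_V(D(T)), and for every z ∈ D(T): (E'^{λ̄}_W)* (T^λ (E^λ_V z)) = T z + G^λ_{V,W} z, where (E'^{λ̄}_W)* : W_{λ̄} → W is the Hilbert-space adjoint of E'^{λ̄}_W : W → W_{λ̄}. -/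
noncomputable section

open Filter Topology

namespace GrubbExt

variable {H : Type*} [NormedAddCommGroup H] [InnerProductSpace ℂ H] [CompleteSpace H]

-- ===== auxiliary lemmas for statement_12 =====

section Aux12

lemma res_inv_eq {P : H →ₗ.[ℂ] H} {μ : ℂ} {B R : H →L[ℂ] H}
    (hB : IsResolvent P 0 B) (hR : IsResolvent P μ R) (f : H) :
    R f = B f + μ • R (B f) := by
  have h1 : P ⟨B f, hB.mem f⟩ = f := by simpa using hB.right f
  have h2 := hR.left ⟨B f, hB.mem f⟩
  rw [h1] at h2
  simp only [map_sub, map_smul] at h2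
  linear_combination (norm := module) h2

lemma res_inv_eq' {P : H →ₗ.[ℂ] H} {μ : ℂ} {B R : H →L[ℂ] H}
    (hB : IsResolvent P 0 B) (hR : IsResolvent P μ R) (f : H) :
    R f = B f + μ • B (R f) := by
  have h1 : P ⟨R f, hR.mem f⟩ = f + μ • R f := sub_eq_iff_eq_add.mp (hR.right f)
  have h2 := hB.left ⟨R f, hR.mem f⟩
  rw [h1] at h2
  simp only [zero_smul, sub_zero, map_add, map_smul] at h2
  exact h2.symm

/-- `F := I - μ B` as a continuous linear map. -/
def Fgen (μ : ℂ) (B : H →L[ℂ] H) : H →L[ℂ] H := ContinuousLinearMap.id ℂ H - μ • B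

lemma Eop_Fgen {P : H →ₗ.[ℂ] H} {μ : ℂ} {B R : H →L[ℂ] H}
    (hB : IsResolvent P 0 B) (hR : IsResolvent P μ R) (f : H) :
    Eop μ R (Fgen μ B f) = f := by
  simp only [Eop, Fgen, ContinuousLinearMap.add_apply, ContinuousLinearMap.sub_apply,
    ContinuousLinearMap.smul_apply, ContinuousLinearMap.id_apply, map_sub, map_smul]
  linear_combination (norm := module) μ • res_inv_eq hB hR f

lemma Fgen_Eop {P : H →ₗ.[ℂ] H} {μ : ℂ} {B R : H →L[ℂ] H}
    (hB : IsResolvent P 0 B) (hR : IsResolvent P μ R) (f : H) :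
    Fgen μ B (Eop μ R f) = f := by
  simp only [Eop, Fgen, ContinuousLinearMap.add_apply, ContinuousLinearMap.sub_apply,
    ContinuousLinearMap.smul_apply, ContinuousLinearMap.id_apply, map_add, map_smul]
  linear_combination (norm := module) μ • res_inv_eq' hB hR f

/-- `E^μ` as a continuous linear equivalence. -/
def Eeq {P : H →ₗ.[ℂ] H} {μ : ℂ} {B R : H →L[ℂ] H}
    (hB : IsResolvent P 0 B) (hR : IsResolvent P μ R) : H ≃L[ℂ] H :=
  ContinuousLinearEquiv.equivOfInverse (Eop μ R) (Fgen μ B)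
    (fun f => Fgen_Eop hB hR f) (fun f => Eop_Fgen hB hR f)

lemma Eop_injective {P : H →ₗ.[ℂ] H} {μ : ℂ} {B R : H →L[ℂ] H}
    (hB : IsResolvent P 0 B) (hR : IsResolvent P μ R) :
    Function.Injective (Eop μ R) :=
  Function.LeftInverse.injective (g := Fgen μ B) (fun f => Fgen_Eop hB hR f)

lemma Eop_image_closure_span {P : H →ₗ.[ℂ] H} {μ : ℂ} {B R : H →L[ℂ] H}
    (hB : IsResolvent P 0 B) (hR : IsResolvent P μ R) (s : Set H) :
    Eop μ R '' ((Submodule.span ℂ s).topologicalClosure : Set H)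
      = ((Submodule.span ℂ (Eop μ R '' s)).topologicalClosure : Set H) := by
  have he : (Eeq hB hR : H → H) = Eop μ R := rfl
  rw [← he, Submodule.topologicalClosure_coe, Submodule.topologicalClosure_coe,
    (Eeq hB hR).image_closure]
  rw [show ⇑(Eeq hB hR) = ⇑((Eeq hB hR).toLinearEquiv.toLinearMap) from rfl,
    ← Submodule.map_coe, ← Submodule.span_image]

lemma Eop_bijOn_closure_span {P : H →ₗ.[ℂ] H} {μ : ℂ} {B R : H →L[ℂ] H}
    (hB : IsResolvent P 0 B) (hR : IsResolvent P μ R) {s t : Set H}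
    (hts : t = Eop μ R '' s) :
    Set.BijOn (Eop μ R) ((Submodule.span ℂ s).topologicalClosure : Set H)
      ((Submodule.span ℂ t).topologicalClosure : Set H) := by
  subst hts
  rw [← Eop_image_closure_span hB hR s]
  exact ((Eop_injective hB hR).injOn).bijOn_image

lemma uzetaL_eq_gen {P : H →ₗ.[ℂ] H} {μ : ℂ} {B R : H →L[ℂ] H}
    (hB : IsResolvent P 0 B) (hR : IsResolvent P μ R) (x g : H) :
    x - R (g - μ • x) = Eop μ R (x - B g) := by
  simp only [Eop, ContinuousLinearMap.add_apply, ContinuousLinearMap.smul_apply,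
    ContinuousLinearMap.id_apply, map_sub, map_smul]
  linear_combination (norm := module) (-1 : ℂ) • res_inv_eq hB hR g

lemma inner_projCl_left {K : Submodule ℂ H} (hK : IsClosed (K : Set H)) (x : H) {w : H}
    (hw : w ∈ K) : (inner ℂ (projCl K hK x) w : ℂ) = inner ℂ x w := by
  haveI : CompleteSpace K := hK.completeSpace_coe
  have hmem : x - (K.orthogonalProjectionOnto x : H) ∈ Kᗮ :=
    Submodule.sub_starProjection_mem_orthogonal (K := K) x
  have h0 : (inner ℂ (x - (K.orthogonalProjectionOnto x : H)) w : ℂ) = 0 := by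
    rw [← inner_conj_symm, (Submodule.mem_orthogonal K _).mp hmem w hw]
    simp
  have h1 : (inner ℂ x w : ℂ) - inner ℂ ((K.orthogonalProjectionOnto x : H)) w = 0 := by
    rw [← inner_sub_left]; exact h0
  exact (sub_eq_zero.mp h1).symm

lemma projCl_mem {K : Submodule ℂ H} (hK : IsClosed (K : Set H)) (x : H) :
    projCl K hK x ∈ K := by
  haveI : CompleteSpace K := hK.completeSpace_coe
  exact ((K.orthogonalProjectionOnto x) : K).2

end Aux12

theorem statement_12 (S : Setup H) (At : H →ₗ.[ℂ] H)
    (h1 : S.Amin ≤ At) (h2 : At ≤ S.Amax)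
    (hcl : IsClosed (At.graph : Set (H × H)))
    (T : H →ₗ.[ℂ] H) (hT : (T.graph : Set (H × H)) = S.Tgraph At)
    (lam : ℂ) (Rg R' : H →L[ℂ] H)
    (hRg : IsResolvent S.Agam lam Rg)
    (hR' : IsResolvent S.Agam.adjoint (starRingEnd ℂ lam) R') :
    Set.BijOn (Eop lam Rg) (S.Vsub At : Set H) (S.VLsub At lam Rg : Set H) ∧
    Set.BijOn (Eop' lam R') (S.Wsub At : Set H) (S.WLsub At lam R' : Set H) ∧
    S.dzetaL At lam Rg = Eop lam Rg '' S.dzeta At ∧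
    ∀ u : S.Amax.domain, (u : H) ∈ At.domain →
      ∀ y r : H, (Eop lam Rg (S.uzeta u), y) ∈ S.TgraphL At lam Rg R' →
        r ∈ S.Wsub At →
        (∀ w : H, w ∈ S.Wsub At →
          (inner ℂ r w : ℂ) = (inner ℂ y (Eop' lam R' w) : ℂ)) →
        r = S.projW At (S.Amax u) + S.Gval At lam Rg (S.uzeta u) := by
  -- the bounded inverses are resolvents at 0
  have hBg : IsResolvent S.Agam 0 S.Agaminv :=
    { mem := S.Agaminv_mem
      left := fun u => by simpa using S.Agaminv_left u
      right := fun f => by simpa using S.Agaminv_right f }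
  have hBs : IsResolvent S.Agam.adjoint 0 S.Agamstarinv :=
    { mem := S.Agamstarinv_mem
      left := fun v => by simpa using S.Agamstarinv_left v
      right := fun f => by simpa using S.Agamstarinv_right f }
  have hE' : Eop' lam R' = Eop (starRingEnd ℂ lam) R' := rfl
  -- key identities
  have key : ∀ u0 : S.Amax.domain, S.uzetaL lam Rg u0 = Eop lam Rg (S.uzeta u0) :=
    fun u0 => uzetaL_eq_gen hBg hRg (u0 : H) (S.Amax u0)
  have key' : ∀ v0 : S.Amax'.domain,
      S.vzetaL lam R' v0 = Eop (starRingEnd ℂ lam) R' (S.vzeta v0) :=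
    fun v0 => uzetaL_eq_gen hBs hR' (v0 : H) (S.Amax' v0)
  -- D(T^λ) = E^λ(D(T))
  have hdzL : S.dzetaL At lam Rg = Eop lam Rg '' S.dzeta At := by
    ext x
    constructor
    · rintro ⟨u0, hu0, rfl⟩
      exact ⟨S.uzeta u0, ⟨u0, hu0, rfl⟩, (key u0).symm⟩
    · rintro ⟨_, ⟨u0, hu0, rfl⟩, rfl⟩
      exact ⟨u0, hu0, (key u0).symm⟩
  have hdzL' : S.dzetaL' At lam R' = Eop (starRingEnd ℂ lam) R' '' S.dzeta' At := by
    ext x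
    constructor
    · rintro ⟨v0, hv0, rfl⟩
      exact ⟨S.vzeta v0, ⟨v0, hv0, rfl⟩, (key' v0).symm⟩
    · rintro ⟨_, ⟨v0, hv0, rfl⟩, rfl⟩
      exact ⟨v0, hv0, (key' v0).symm⟩
  have hbijV : Set.BijOn (Eop lam Rg) (S.Vsub At : Set H) (S.VLsub At lam Rg : Set H) :=
    Eop_bijOn_closure_span hBg hRg hdzL
  have hbijW : Set.BijOn (Eop' lam R') (S.Wsub At : Set H) (S.WLsub At lam R' : Set H) := by
    rw [hE']
    exact Eop_bijOn_closure_span hBs hR' hdzL'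
  refine ⟨hbijV, hbijW, hdzL, ?_⟩
  -- main identity
  intro u hu y r hyg hrW hrw
  obtain ⟨u', hu', hfe, hy⟩ := hyg
  dsimp only at hfe hy
  -- hfe : Eop lam Rg (S.uzeta u) = S.uzetaL lam Rg u'
  have hzz : S.uzeta u = S.uzeta u' := by
    apply Eop_injective hBg hRg
    rw [hfe, key u']
  -- well-definedness of T : same ζ-part gives same projected value
  have hproj_eq : S.projW At (S.Amax u) = S.projW At (S.Amax u') := by
    have m1 : (S.uzeta u, S.projW At (S.Amax u)) ∈ (T.graph : Set (H × H)) := by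
      rw [hT]; exact ⟨u, hu, rfl, rfl⟩
    have m2 : (S.uzeta u, S.projW At (S.Amax u')) ∈ (T.graph : Set (H × H)) := by
      rw [hT]; exact ⟨u', hu', hzz, rfl⟩
    rw [SetLike.mem_coe, LinearPMap.mem_graph_iff] at m1 m2
    obtain ⟨a, ha1, ha2⟩ := m1
    obtain ⟨b, hb1, hb2⟩ := m2
    dsimp only at ha1 ha2 hb1 hb2
    have hab : a = b := Subtype.ext (by rw [ha1, hb1])
    rw [← ha2, ← hb2, hab]
  -- density / formal adjoint
  have hdense : Dense (S.Agam.domain : Set H) := S.dense_Amin.mono S.Amin_le_Agam.1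
  have hfa := LinearPMap.adjoint_isFormalAdjoint hdense
  -- ⟪Rg x, w⟫ = ⟪x, R' w⟫
  have hRR' : ∀ x w : H, (inner ℂ (Rg x) w : ℂ) = inner ℂ x (R' w) := by
    intro x w
    have hb : S.Agam.adjoint ⟨R' w, hR'.mem w⟩ = w + (starRingEnd ℂ lam) • R' w :=
      sub_eq_iff_eq_add.mp (hR'.right w)
    have ha : S.Agam ⟨Rg x, hRg.mem x⟩ = x + lam • Rg x :=
      sub_eq_iff_eq_add.mp (hRg.right x)
    have h := hfa ⟨R' w, hR'.mem w⟩ ⟨Rg x, hRg.mem x⟩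
    rw [hb, ha] at h
    simp only [inner_add_left, inner_add_right, inner_smul_left, inner_smul_right,
      RingHom.id_apply, starRingEnd_self_apply, Complex.conj_conj] at h
    -- h : ⟪w, Rg x⟫ + lam * ⟪R' w, Rg x⟫ = ⟪R' w, x⟫ + lam * ⟪R' w, Rg x⟫
    have h2 : (inner ℂ w (Rg x) : ℂ) = inner ℂ (R' w : H) x := by linear_combination h
    calc (inner ℂ (Rg x) w : ℂ) = starRingEnd ℂ (inner ℂ w (Rg x)) := (inner_conj_symm _ _).symm
      _ = starRingEnd ℂ (inner ℂ (R' w : H) x) := by rw [h2]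
      _ = inner ℂ x (R' w) := inner_conj_symm _ _
  -- notation
  set c := starRingEnd ℂ lam with hc
  set g : H := S.Amax u with hg
  set g' : H := S.Amax u' with hg'
  set z : H := S.uzeta u with hz
  set p : H := S.Agaminv g' with hp
  have hzup : z = (u' : H) - p := hzz
  -- the target element is in W
  have hr0W : S.projW At (S.Amax u) + S.Gval At lam Rg (S.uzeta u) ∈ S.Wsub At := by
    refine Submodule.add_mem _ ?_ ?_
    · exact projCl_mem _ _
    · exact Submodule.neg_mem _ (projCl_mem _ _)
  -- E' maps W into W_λ̄
  have hEW : ∀ w ∈ S.Wsub At, Eop' lam R' w ∈ S.WLsub At lam R' :=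
    fun w hw => hbijW.mapsTo hw
  -- key inner-product identity
  have hkey : ∀ w ∈ S.Wsub At,
      (inner ℂ (r - (S.projW At (S.Amax u) + S.Gval At lam Rg (S.uzeta u))) w : ℂ) = 0 := by
    intro w hw
    have hrw' := hrw w hw
    -- ⟪y, E'w⟫ = ⟪g' - lam u', E'w⟫
    have hyE : (inner ℂ y (Eop' lam R' w) : ℂ) = inner ℂ (g' - lam • (u' : H)) (Eop' lam R' w) := by
      rw [hy]
      exact inner_projCl_left _ _ (hEW w hw)
    -- F1 : ⟪g', w⟫ = ⟪g, w⟫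
    have F1 : (inner ℂ g' w : ℂ) = inner ℂ g w := by
      calc (inner ℂ g' w : ℂ) = inner ℂ (S.projW At g') w := (inner_projCl_left _ _ hw).symm
        _ = inner ℂ (S.projW At g) w := by rw [← hproj_eq]
        _ = inner ℂ g w := inner_projCl_left _ _ hw
    -- F2 : ⟪g', R'w⟫ = ⟪p, w⟫ + c ⟪p, R'w⟫
    have F2 : (inner ℂ g' (R' w) : ℂ) = inner ℂ p w + c * inner ℂ p (R' w) := by
      have hb : S.Agam.adjoint ⟨R' w, hR'.mem w⟩ = w + c • R' w :=
        sub_eq_iff_eq_add.mp (hR'.right w)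
      have hpg : S.Agam ⟨p, S.Agaminv_mem g'⟩ = g' := S.Agaminv_right g'
      have h := hfa ⟨R' w, hR'.mem w⟩ ⟨p, S.Agaminv_mem g'⟩
      rw [hb, hpg] at h
      -- h : ⟪w + c • R'w, p⟫ = ⟪R'w, g'⟫
      have h' := congrArg (starRingEnd ℂ) h
      simp only [inner_conj_symm] at h'
      -- h' : ⟪p, w + c • R'w⟫ = ⟪g', R'w⟫
      rw [← h', inner_add_right, inner_smul_right]
    -- F3 : ⟪Rg z, w⟫ = ⟪z, R'w⟫
    have F3 : (inner ℂ (Rg z) w : ℂ) = inner ℂ z (R' w) := hRR' z w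
    -- expand everything
    have e1 : (inner ℂ r w : ℂ) = inner ℂ (g' - lam • (u' : H)) (Eop' lam R' w) := by
      rw [hrw', hyE]
    have e2 : (inner ℂ (g' - lam • (u' : H)) (Eop' lam R' w) : ℂ)
        = inner ℂ g' w + c * inner ℂ g' (R' w)
          - c * inner ℂ (u' : H) w - c * (c * inner ℂ (u' : H) (R' w)) := by
      simp only [Eop', ContinuousLinearMap.add_apply, ContinuousLinearMap.smul_apply,
        ContinuousLinearMap.id_apply, inner_sub_left, inner_add_right, inner_smul_left,
        inner_smul_right]
      ring
    have e3 : (inner ℂ (S.projW At (S.Amax u) + S.Gval At lam Rg (S.uzeta u)) w : ℂ)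
        = inner ℂ g w - (c * inner ℂ z w + c * (c * inner ℂ (Rg z) w)) := by
      have hpr1 : (inner ℂ (S.projW At (S.Amax u)) w : ℂ) = inner ℂ g w :=
        inner_projCl_left _ _ hw
      have hpr2 : (inner ℂ (S.projW At (lam • Eop lam Rg z)) w : ℂ)
          = inner ℂ (lam • Eop lam Rg z) w := inner_projCl_left _ _ hw
      rw [inner_add_left, hpr1]
      rw [show S.Gval At lam Rg (S.uzeta u) = -(S.projW At (lam • Eop lam Rg z)) from rfl]
      rw [inner_neg_left, hpr2]
      simp only [Eop, ContinuousLinearMap.add_apply, ContinuousLinearMap.smul_apply,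
        ContinuousLinearMap.id_apply, inner_smul_left, inner_add_left]
      ring
    have e4 : (inner ℂ z w : ℂ) = inner ℂ (u' : H) w - inner ℂ p w := by
      rw [hzup, inner_sub_left]
    have e5 : (inner ℂ z (R' w) : ℂ) = inner ℂ (u' : H) (R' w) - inner ℂ p (R' w) := by
      rw [hzup, inner_sub_left]
    rw [inner_sub_left, e1, e2, e3]
    linear_combination F1 + c * F2 + c * c * F3 + c * e4 + c * c * e5
  have hmem : r - (S.projW At (S.Amax u) + S.Gval At lam Rg (S.uzeta u)) ∈ S.Wsub At :=
    Submodule.sub_mem _ hrW hr0W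
  have h0 := hkey _ hmem
  rw [inner_self_eq_zero] at h0
  exact sub_eq_zero.mp h0

end GrubbExt
end
end
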